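/- arXiv:1707.08758 — 3 statements merged into one kernel-verified Lean document; each statement's English description precedes it below -/
import Mathlib

section
/- If conditions (C1) and (C2) hold, then ~⁺_j is symmetric: if (w,σ) ~⁺_j (w',σ') then (w',σ') ~⁺_j (w,σ). -/
/-- Under (C1) and (C2), ~⁺_j is symmetric. -/
theorem updated_relation_symmetric
    {W A E : Type*}
    (sim : A → W → W → Prop)
    (f : A → W → E → E → Prop)
    (pre : E → W → Prop)
    (hsim : ∀ j, Equivalence (sim j))
    (hC1 : ∀ j w w', sim j w w' → f j w = f j w')
    (hC2 : ∀ j w, Equivalence (f j w))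
    (j : A) :
    ∀ x y : {p : W × E // pre p.2 p.1},
      (sim j x.1.1 y.1.1 ∧ f j x.1.1 x.1.2 y.1.2) →
      (sim j y.1.1 x.1.1 ∧ f j y.1.1 y.1.2 x.1.2) := by
  intro x y ⟨hs, hf⟩
  refine ⟨(hsim j).symm hs, ?_⟩
  rw [← hC1 j _ _ hs]
  exact (hC2 j _).symm hf
end

section
/- In the canonical model, condition (C1) holds: if Γ ~^c_j Δ (i.e., {K_j φ : K_j φ ∈ Γ} = {K_j φ : K_j φ ∈ Δ}) then f^c_j(Γ) = f^c_j(Δ), where f^c_j(Γ) = {(σ,σ') : ξ_{j,σ,σ'} ∈ Γ}. -/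
/-- Formulas of L_EL⁺: atoms, ξ-atoms, negation, conjunction, implication, K_j. -/
inductive ELForm (P A E : Type) : Type
  | atom : P → ELForm P A E
  | xi : A → E → E → ELForm P A E
  | neg : ELForm P A E → ELForm P A E
  | and : ELForm P A E → ELForm P A E → ELForm P A E
  | impl : ELForm P A E → ELForm P A E → ELForm P A E
  | K : A → ELForm P A E → ELForm P A E

/-- In the canonical model, (C1) holds: if Γ ~^c_j Δ (Γ and Δ contain
the same formulas of the form K_j φ) then f^c_j(Γ) = f^c_j(Δ), where
f^c_j(Γ) = {(σ,σ') : ξ_{j,σ,σ'} ∈ Γ}. Γ, Δ are maximal consistent sets of a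
system containing the T axiom and the interaction axiom ξ → K_j ξ, MP-closed. -/
theorem canonical_model_C1
    {P A E : Type}
    (Γ Δ : Set (ELForm P A E))
    (hMPΓ : ∀ φ ψ : ELForm P A E, φ ∈ Γ → ELForm.impl φ ψ ∈ Γ → ψ ∈ Γ)
    (hMPΔ : ∀ φ ψ : ELForm P A E, φ ∈ Δ → ELForm.impl φ ψ ∈ Δ → ψ ∈ Δ)
    -- T axiom instances: K_j φ → φ
    (hTΓ : ∀ (j : A) (φ : ELForm P A E), ELForm.impl (ELForm.K j φ) φ ∈ Γ)
    (hTΔ : ∀ (j : A) (φ : ELForm P A E), ELForm.impl (ELForm.K j φ) φ ∈ Δ)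
    -- interaction axiom instances: ξ_{j,σ,σ'} → K_j ξ_{j,σ,σ'}
    (hIΓ : ∀ (j : A) (σ σ' : E),
      ELForm.impl (ELForm.xi j σ σ') (ELForm.K j (ELForm.xi j σ σ')) ∈ Γ)
    (hIΔ : ∀ (j : A) (σ σ' : E),
      ELForm.impl (ELForm.xi j σ σ') (ELForm.K j (ELForm.xi j σ σ')) ∈ Δ)
    (j : A)
    -- Γ ~^c_j Δ
    (hsim : ∀ φ : ELForm P A E, ELForm.K j φ ∈ Γ ↔ ELForm.K j φ ∈ Δ) :
    ∀ σ σ' : E, ELForm.xi j σ σ' ∈ Γ ↔ ELForm.xi j σ σ' ∈ Δ := by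
  intro σ σ'
  constructor
  · intro h
    exact hMPΔ _ _ ((hsim _).1 (hMPΓ _ _ h (hIΓ j σ σ'))) (hTΔ j _)
  · intro h
    exact hMPΓ _ _ ((hsim _).2 (hMPΔ _ _ h (hIΔ j σ σ'))) (hTΓ j _)
end

section
/- Every formula φ of L_DL⁺ has a translation t(φ) ∈ L_EL⁺ (containing no update modalities) which is provably equivalent to φ in the given axiom system; the proof proceeds by induction first on the action nesting depth d(φ) and then on the weight w(φ). -/
/-- Formulas of L_DL⁺: atoms p, ξ-atoms, ¬, ∧, K_j, and update modalities [σ]. -/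
inductive DLForm (P A E : Type) : Type
  | atom : P → DLForm P A E
  | xi : A → E → E → DLForm P A E
  | neg : DLForm P A E → DLForm P A E
  | and : DLForm P A E → DLForm P A E → DLForm P A E
  | K : A → DLForm P A E → DLForm P A E
  | box : E → DLForm P A E → DLForm P A E

namespace DLForm

variable {P A E : Type}

/-- Material implication, defined from ¬ and ∧. -/
def impl (φ ψ : DLForm P A E) : DLForm P A E := neg (and φ (neg ψ))

/-- Biconditional. -/
def biimpl (φ ψ : DLForm P A E) : DLForm P A E := and (impl φ ψ) (impl ψ φ)

/-- A fixed tautology (used as the empty conjunction). -/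
def top [Inhabited P] : DLForm P A E := impl (atom default) (atom default)

/-- Finite conjunction of a list of formulas. -/
def bigAnd [Inhabited P] (l : List (DLForm P A E)) : DLForm P A E :=
  l.foldr and top

/-- The conjunction ⋀_{σ'∈Σ} g(σ') over all actions. -/
noncomputable def conjAll [Inhabited P] [Fintype E] (g : E → DLForm P A E) : DLForm P A E :=
  bigAnd ((Finset.univ : Finset E).toList.map g)

/-- Membership in L_EL⁺: no update modalities occur. -/
def NoBox : DLForm P A E → Prop
  | atom _ => True
  | xi _ _ _ => True
  | neg φ => NoBox φ
  | and φ ψ => NoBox φ ∧ NoBox ψ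
  | K _ φ => NoBox φ
  | box _ _ => False

/-- Boolean evaluation treating atoms, ξ-atoms, K-formulas and box-formulas as
propositional atoms; used to express "instantiation of a propositional tautology". -/
def bInterp (v : DLForm P A E → Bool) : DLForm P A E → Bool
  | neg φ => ! bInterp v φ
  | and φ ψ => bInterp v φ && bInterp v ψ
  | φ => v φ

/-- The axiom system: S5 for each K_j, the ξ axioms, the interaction axiom, the
action axioms 10(a)–(e), modus ponens and the necessitation rules. -/
inductive Provable [Inhabited P] [Fintype E] (Pre : E → DLForm P A E) :
    DLForm P A E → Prop
  -- 1. all instantiations of propositional tautologies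
  | taut (φ : DLForm P A E) (h : ∀ v, bInterp v φ = true) : Provable Pre φ
  -- 2. K distribution
  | kdist (a : A) (φ ψ : DLForm P A E) :
      Provable Pre (impl (K a (impl φ ψ)) (impl (K a φ) (K a ψ)))
  -- 3. T
  | tax (a : A) (φ : DLForm P A E) : Provable Pre (impl (K a φ) φ)
  -- 4. positive introspection
  | four (a : A) (φ : DLForm P A E) : Provable Pre (impl (K a φ) (K a (K a φ)))
  -- 5. negative introspection
  | five (a : A) (φ : DLForm P A E) :
      Provable Pre (impl (neg (K a φ)) (K a (neg (K a φ))))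
  -- 6. ξ axioms
  | xiRefl (j : A) (σ : E) : Provable Pre (xi j σ σ)
  | xiSymm (j : A) (σ σ' : E) : Provable Pre (impl (xi j σ σ') (xi j σ' σ))
  | xiTrans (j : A) (σ σ' σ'' : E) :
      Provable Pre (impl (xi j σ σ') (impl (xi j σ' σ'') (xi j σ σ'')))
  -- 7. interaction axiom
  | interact (j : A) (σ σ' : E) :
      Provable Pre (impl (xi j σ σ') (K j (xi j σ σ')))
  -- 10(a). box distribution
  | boxDist (σ : E) (φ ψ : DLForm P A E) :
      Provable Pre (impl (box σ (impl φ ψ)) (impl (box σ φ) (box σ ψ)))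
  -- 10(b). atomic reduction (for primitive formulas, including ξ-atoms)
  | boxAtom (σ : E) (p : P) :
      Provable Pre (biimpl (box σ (atom p)) (impl (Pre σ) (atom p)))
  | boxXi (σ : E) (j : A) (τ τ' : E) :
      Provable Pre (biimpl (box σ (xi j τ τ')) (impl (Pre σ) (xi j τ τ')))
  -- 10(c). negation reduction
  | boxNeg (σ : E) (φ : DLForm P A E) :
      Provable Pre (biimpl (box σ (neg φ)) (impl (Pre σ) (neg (box σ φ))))
  -- 10(d). conjunction reduction
  | boxAnd (σ : E) (φ ψ : DLForm P A E) :
      Provable Pre (biimpl (box σ (and φ ψ)) (and (box σ φ) (box σ ψ)))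
  -- 10(e). knowledge reduction
  | boxK (σ : E) (a : A) (φ : DLForm P A E) :
      Provable Pre (biimpl (box σ (K a φ))
        (impl (Pre σ)
          (conjAll (fun σ' => impl (xi a σ σ') (K a (box σ' φ))))))
  -- 8. modus ponens
  | mp (φ ψ : DLForm P A E) : Provable Pre (impl φ ψ) → Provable Pre φ →
      Provable Pre ψ
  -- 9. K necessitation
  | necK (a : A) (φ : DLForm P A E) : Provable Pre φ → Provable Pre (K a φ)
  -- 11. action necessitation
  | necBox (σ : E) (φ : DLForm P A E) : Provable Pre φ → Provable Pre (box σ φ)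

/-- The recursive translation t, presented as an inductive relation capturing its
defining equations (t([σ][σ']φ) = t([σ] t([σ']φ)) etc.). -/
inductive Tr [Inhabited P] [Fintype E] (Pre : E → DLForm P A E) :
    DLForm P A E → DLForm P A E → Prop
  | atom (p : P) : Tr Pre (atom p) (atom p)
  | xi (j : A) (σ σ' : E) : Tr Pre (xi j σ σ') (xi j σ σ')
  | neg {φ φ'} : Tr Pre φ φ' → Tr Pre (neg φ) (neg φ')
  | and {φ φ' ψ ψ'} : Tr Pre φ φ' → Tr Pre ψ ψ' →
      Tr Pre (and φ ψ) (and φ' ψ')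
  | K (a : A) {φ φ'} : Tr Pre φ φ' → Tr Pre (K a φ) (K a φ')
  | boxAtom (σ : E) (p : P) : Tr Pre (box σ (atom p)) (impl (Pre σ) (atom p))
  | boxXi (σ : E) (j : A) (τ τ' : E) :
      Tr Pre (box σ (xi j τ τ')) (impl (Pre σ) (xi j τ τ'))
  | boxNeg (σ : E) {φ χ} : Tr Pre (box σ φ) χ →
      Tr Pre (box σ (neg φ)) (impl (Pre σ) (neg χ))
  | boxAnd (σ : E) {φ ψ χ₁ χ₂} : Tr Pre (box σ φ) χ₁ → Tr Pre (box σ ψ) χ₂ →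
      Tr Pre (box σ (and φ ψ)) (and χ₁ χ₂)
  | boxK (σ : E) (a : A) {φ} (g : E → DLForm P A E)
      (h : ∀ σ', Tr Pre (box σ' φ) (g σ')) :
      Tr Pre (box σ (K a φ))
        (impl (Pre σ) (conjAll (fun σ' => impl (xi a σ σ') (K a (g σ')))))
  | boxBox (σ σ' : E) {φ ψ χ} : Tr Pre (box σ' φ) ψ → Tr Pre (box σ ψ) χ →
      Tr Pre (box σ (box σ' φ)) χ

end DLForm
namespace DLForm

variable {P A E : Type}

@[simp] lemma bInterp_neg (v : DLForm P A E → Bool) (φ : DLForm P A E) :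
    bInterp v (neg φ) = ! bInterp v φ := rfl

@[simp] lemma bInterp_and (v : DLForm P A E → Bool) (φ ψ : DLForm P A E) :
    bInterp v (and φ ψ) = (bInterp v φ && bInterp v ψ) := rfl

section Prov

variable [Inhabited P] [Fintype E] {Pre : E → DLForm P A E}

lemma biimpl_refl (φ : DLForm P A E) : Provable Pre (biimpl φ φ) := by
  apply Provable.taut
  intro v
  simp only [biimpl, impl, bInterp_neg, bInterp_and]
  cases bInterp v φ <;> rfl

lemma biimpl_symm {φ ψ : DLForm P A E} (h : Provable Pre (biimpl φ ψ)) :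
    Provable Pre (biimpl ψ φ) := by
  refine Provable.mp _ _ (Provable.taut _ ?_) h
  intro v
  simp only [biimpl, impl, bInterp_neg, bInterp_and]
  cases bInterp v φ <;> cases bInterp v ψ <;> rfl

lemma biimpl_trans {φ ψ χ : DLForm P A E} (h1 : Provable Pre (biimpl φ ψ))
    (h2 : Provable Pre (biimpl ψ χ)) : Provable Pre (biimpl φ χ)  := by
  refine Provable.mp _ _ (Provable.mp _ _ (Provable.taut _ ?_) h1) h2
  intro v
  simp only [biimpl, impl, bInterp_neg, bInterp_and]
  cases bInterp v φ <;> cases bInterp v ψ <;> cases bInterp v χ <;> rfl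

lemma neg_congr {φ ψ : DLForm P A E} (h : Provable Pre (biimpl φ ψ)) :
    Provable Pre (biimpl (neg φ) (neg ψ)) := by
  refine Provable.mp _ _ (Provable.taut _ ?_) h
  intro v
  simp only [biimpl, impl, bInterp_neg, bInterp_and]
  cases bInterp v φ <;> cases bInterp v ψ <;> rfl

lemma and_congr {φ₁ ψ₁ φ₂ ψ₂ : DLForm P A E} (h1 : Provable Pre (biimpl φ₁ ψ₁))
    (h2 : Provable Pre (biimpl φ₂ ψ₂)) :
    Provable Pre (biimpl (and φ₁ φ₂) (and ψ₁ ψ₂)) := by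
  refine Provable.mp _ _ (Provable.mp _ _ (Provable.taut _ ?_) h1) h2
  intro v
  simp only [biimpl, impl, bInterp_neg, bInterp_and]
  cases bInterp v φ₁ <;> cases bInterp v ψ₁ <;> cases bInterp v φ₂ <;>
    cases bInterp v ψ₂ <;> rfl

lemma implr_congr (α : DLForm P A E) {φ ψ : DLForm P A E}
    (h : Provable Pre (biimpl φ ψ)) :
    Provable Pre (biimpl (impl α φ) (impl α ψ)) := by
  refine Provable.mp _ _ (Provable.taut _ ?_) h
  intro v
  simp only [biimpl, impl, bInterp_neg, bInterp_and]
  cases bInterp v α <;> cases bInterp v φ <;> cases bInterp v ψ <;> rfl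

lemma biimpl_mp {φ ψ : DLForm P A E} (h : Provable Pre (biimpl φ ψ)) :
    Provable Pre (impl φ ψ) := by
  refine Provable.mp _ _ (Provable.taut _ ?_) h
  intro v
  simp only [biimpl, impl, bInterp_neg, bInterp_and]
  cases bInterp v φ <;> cases bInterp v ψ <;> rfl

lemma biimpl_mpr {φ ψ : DLForm P A E} (h : Provable Pre (biimpl φ ψ)) :
    Provable Pre (impl ψ φ) := by
  refine Provable.mp _ _ (Provable.taut _ ?_) h
  intro v
  simp only [biimpl, impl, bInterp_neg, bInterp_and]
  cases bInterp v φ <;> cases bInterp v ψ <;> rfl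

lemma of_impls {φ ψ : DLForm P A E} (h1 : Provable Pre (impl φ ψ))
    (h2 : Provable Pre (impl ψ φ)) : Provable Pre (biimpl φ ψ) := by
  refine Provable.mp _ _ (Provable.mp _ _ (Provable.taut _ ?_) h1) h2
  intro v
  simp only [biimpl, impl, bInterp_neg, bInterp_and]
  cases bInterp v φ <;> cases bInterp v ψ <;> rfl

lemma K_congr (a : A) {φ ψ : DLForm P A E} (h : Provable Pre (biimpl φ ψ)) :
    Provable Pre (biimpl (K a φ) (K a ψ)) := by
  apply of_impls
  · exact Provable.mp _ _ (Provable.kdist a φ ψ) (Provable.necK a _ (biimpl_mp h))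
  · exact Provable.mp _ _ (Provable.kdist a ψ φ) (Provable.necK a _ (biimpl_mpr h))

lemma box_congr (σ : E) {φ ψ : DLForm P A E} (h : Provable Pre (biimpl φ ψ)) :
    Provable Pre (biimpl (box σ φ) (box σ ψ)) := by
  apply of_impls
  · exact Provable.mp _ _ (Provable.boxDist σ φ ψ) (Provable.necBox σ _ (biimpl_mp h))
  · exact Provable.mp _ _ (Provable.boxDist σ ψ φ) (Provable.necBox σ _ (biimpl_mpr h))

lemma bigAnd_congr {ι : Type} (l : List ι) (f g : ι → DLForm P A E)
    (h : ∀ x ∈ l, Provable Pre (biimpl (f x) (g x))) :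
    Provable Pre (biimpl (bigAnd (l.map f)) (bigAnd (l.map g))) := by
  induction l with
  | nil => exact biimpl_refl _
  | cons a t ih =>
      simp only [List.map_cons, bigAnd, List.foldr_cons]
      exact and_congr (h a (by simp))
        (ih (fun x hx => h x (by simp [hx]))
          : Provable Pre (biimpl (List.foldr and top (t.map f)) _))

lemma conjAll_congr (f g : E → DLForm P A E)
    (h : ∀ σ, Provable Pre (biimpl (f σ) (g σ))) :
    Provable Pre (biimpl (conjAll f) (conjAll g)) := by
  unfold conjAll
  exact bigAnd_congr _ f g (fun x _ => h x)

end Prov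

@[simp] lemma noBox_impl (φ ψ : DLForm P A E) :
    NoBox (impl φ ψ) ↔ NoBox φ ∧ NoBox ψ := by
  simp [impl, NoBox]

lemma noBox_top [Inhabited P] : NoBox (top : DLForm P A E) := by
  simp [top, NoBox]

lemma noBox_bigAnd [Inhabited P] (l : List (DLForm P A E))
    (h : ∀ x ∈ l, NoBox x) : NoBox (bigAnd l) := by
  induction l with
  | nil => exact noBox_top
  | cons a t ih =>
      exact ⟨h a (by simp), ih (fun x hx => h x (by simp [hx]))⟩

lemma noBox_conjAll [Inhabited P] [Fintype E] (g : E → DLForm P A E)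
    (h : ∀ σ, NoBox (g σ)) : NoBox (conjAll g) := by
  apply noBox_bigAnd
  intro x hx
  simp only [List.mem_map] at hx
  obtain ⟨σ, _, rfl⟩ := hx
  exact h σ

/-- Action nesting depth. -/
def depth : DLForm P A E → ℕ
  | atom _ => 0
  | xi _ _ _ => 0
  | neg φ => depth φ
  | and φ ψ => max (depth φ) (depth ψ)
  | K _ φ => depth φ
  | box _ φ => depth φ + 1

/-- Weight. -/
def weight : DLForm P A E → ℕ
  | atom _ => 1
  | xi _ _ _ => 1
  | neg φ => weight φ + 1
  | and φ ψ => max (weight φ) (weight ψ) + 1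
  | K _ φ => weight φ + 1
  | box _ φ => weight φ + 1

lemma depth_eq_zero_of_noBox {φ : DLForm P A E} (h : NoBox φ) : depth φ = 0 := by
  induction φ with
  | atom p => rfl
  | xi j σ σ' => rfl
  | neg φ ih => exact ih h
  | and φ ψ ih1 ih2 => simp [depth, ih1 h.1, ih2 h.2]
  | K a φ ih => exact ih h
  | box σ φ ih => exact absurd h (by simp [NoBox])

end DLForm
open DLForm in
lemma translation_aux
    {P A E : Type} [Inhabited P] [Fintype E]
    (Pre : E → DLForm P A E)
    (hPre : ∀ σ : E, NoBox (Pre σ)) :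
    ∀ D W : ℕ, ∀ φ : DLForm P A E, depth φ < D → weight φ < W →
      ∃ ψ : DLForm P A E,
        Tr Pre φ ψ ∧ NoBox ψ ∧ Provable Pre (biimpl φ ψ) := by
  intro D
  induction D with
  | zero => intro W φ hd _; omega
  | succ D ihD =>
    intro W
    induction W with
    | zero => intro φ _ hw; omega
    | succ W ihW =>
      intro φ hd hw
      match φ with
      | .atom p => exact ⟨atom p, Tr.atom p, trivial, biimpl_refl _⟩
      | .xi j σ σ' => exact ⟨xi j σ σ', Tr.xi j σ σ', trivial, biimpl_refl _⟩
      | .neg φ =>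
          obtain ⟨ψ, h1, h2, h3⟩ := ihW φ hd (by simp [weight] at hw ⊢; omega)
          exact ⟨neg ψ, Tr.neg h1, h2, neg_congr h3⟩
      | .and φ₁ φ₂ =>
          obtain ⟨ψ₁, h1, h2, h3⟩ := ihW φ₁
            (by simp [depth] at hd ⊢; omega) (by simp [weight] at hw ⊢; omega)
          obtain ⟨ψ₂, h1', h2', h3'⟩ := ihW φ₂
            (by simp [depth] at hd ⊢; omega) (by simp [weight] at hw ⊢; omega)
          exact ⟨and ψ₁ ψ₂, Tr.and h1 h1', ⟨h2, h2'⟩, and_congr h3 h3'⟩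
      | .K a φ =>
          obtain ⟨ψ, h1, h2, h3⟩ := ihW φ hd (by simp [weight] at hw ⊢; omega)
          exact ⟨K a ψ, Tr.K a h1, h2, K_congr a h3⟩
      | .box σ φ =>
        match φ with
        | .atom p =>
            exact ⟨impl (Pre σ) (atom p), Tr.boxAtom σ p,
              by simp [hPre σ, NoBox], Provable.boxAtom σ p⟩
        | .xi j τ τ' =>
            exact ⟨impl (Pre σ) (xi j τ τ'), Tr.boxXi σ j τ τ',
              by simp [hPre σ, NoBox], Provable.boxXi σ j τ τ'⟩
        | .neg φ =>
            obtain ⟨χ, h1, h2, h3⟩ := ihW (box σ φ)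
              (by simp [depth] at hd ⊢; omega) (by simp [weight] at hw ⊢; omega)
            refine ⟨impl (Pre σ) (neg χ), Tr.boxNeg σ h1,
              by simp [hPre σ, NoBox, h2], ?_⟩
            exact biimpl_trans (Provable.boxNeg σ φ)
              (implr_congr (Pre σ) (neg_congr h3))
        | .and φ₁ φ₂ =>
            obtain ⟨χ₁, h1, h2, h3⟩ := ihW (box σ φ₁)
              (by simp [depth] at hd ⊢; omega) (by simp [weight] at hw ⊢; omega)
            obtain ⟨χ₂, h1', h2', h3'⟩ := ihW (box σ φ₂)
              (by simp [depth] at hd ⊢; omega) (by simp [weight] at hw ⊢; omega)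
            exact ⟨and χ₁ χ₂, Tr.boxAnd σ h1 h1', ⟨h2, h2'⟩,
              biimpl_trans (Provable.boxAnd σ φ₁ φ₂) (and_congr h3 h3')⟩
        | .K a φ =>
            have H : ∀ σ' : E, ∃ χ, Tr Pre (box σ' φ) χ ∧ NoBox χ ∧
                Provable Pre (biimpl (box σ' φ) χ) := by
              intro σ'
              exact ihW (box σ' φ) (by simp [depth] at hd ⊢; omega)
                (by simp [weight] at hw ⊢; omega)
            choose g hg1 hg2 hg3 using H
            refine ⟨impl (Pre σ) (conjAll (fun σ' => impl (xi a σ σ') (K a (g σ')))),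
              Tr.boxK σ a g hg1, ?_, ?_⟩
            · refine (noBox_impl _ _).2 ⟨hPre σ, noBox_conjAll _ fun σ' => ?_⟩
              exact (noBox_impl _ _).2 ⟨trivial, hg2 σ'⟩
            · refine biimpl_trans (Provable.boxK σ a φ) ?_
              refine implr_congr (Pre σ) (conjAll_congr _ _ fun σ' => ?_)
              exact implr_congr _ (K_congr a (hg3 σ'))
        | .box σ' φ =>
            obtain ⟨ψ, h1, h2, h3⟩ := ihD (weight (box σ' φ) + 1) (box σ' φ)
              (by simp [depth] at hd ⊢; omega) (by omega)
            obtain ⟨χ, h1', h2', h3'⟩ := ihD (weight (box σ ψ) + 1) (box σ ψ)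
              (by simp [depth, depth_eq_zero_of_noBox h2] at hd ⊢; omega)
              (by omega)
            refine ⟨χ, Tr.boxBox σ σ' h1 h1', h2', ?_⟩
            exact biimpl_trans (box_congr σ h3) h3'

open DLForm in
/-- Every formula φ of L_DL⁺ has a translation t(φ) ∈ L_EL⁺
(containing no update modalities) which is provably equivalent to φ in the given
axiom system (with each precondition Pre(σ) an epistemic formula). -/
theorem translation_exists_provably_equivalent
    {P A E : Type} [Inhabited P] [Fintype E]
    (Pre : E → DLForm P A E)
    (hPre : ∀ σ : E, NoBox (Pre σ)) :
    ∀ φ : DLForm P A E, ∃ ψ : DLForm P A E,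
      Tr Pre φ ψ ∧ NoBox ψ ∧ Provable Pre (biimpl φ ψ) := by
  intro φ
  exact translation_aux Pre hPre (depth φ + 1) (weight φ + 1) φ
    (by omega) (by omega)
end
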